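/- Any binary cubic form f ∈ ℂ[x,y] that factors as a product of three pairwise non-proportional linear forms can be written as f = ℓ₁³ + ℓ₂³ for some linear forms ℓ₁, ℓ₂ ∈ ℂ[x,y]. -/

import Mathlib

open MvPolynomial

lemma deg_fin2 (d : Fin 2 →₀ ℕ) : d.degree = d 0 + d 1 := by
  classical
  rw [Finsupp.degree_apply, Finset.sum_subset (Finset.subset_univ d.support)
    (by intro i _ hi; simpa using hi)]
  simp [Fin.sum_univ_two]

lemma single_ne : (Finsupp.single (0 : Fin 2) 1) ≠ (Finsupp.single (1 : Fin 2) 1) := by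
  intro hh
  have := DFunLike.congr_fun hh (0 : Fin 2)
  simp [Finsupp.single_apply] at this

lemma rep1 (l : MvPolynomial (Fin 2) ℂ) (h : l.IsHomogeneous 1) :
    l = C (coeff (Finsupp.single 0 1) l) * X 0 + C (coeff (Finsupp.single 1 1) l) * X 1 := by
  ext m
  rw [coeff_add, coeff_C_mul, coeff_C_mul, coeff_X', coeff_X']
  by_cases hm : m.degree = 1
  · rw [deg_fin2] at hm
    have h2 : (m 0 = 1 ∧ m 1 = 0) ∨ (m 0 = 0 ∧ m 1 = 1) := by omega
    have key : ∀ a b : ℕ, m 0 = a → m 1 = b → m = Finsupp.single 0 a + Finsupp.single 1 b := by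
      intro a b ha hb
      ext i
      fin_cases i <;> simp [ha, hb, Finsupp.single_apply]
    rcases h2 with ⟨ha, hb⟩ | ⟨ha, hb⟩
    · have hs : m = Finsupp.single 0 1 := by simpa using key _ _ ha hb
      subst hs; simp [single_ne.symm]
    · have hs : m = Finsupp.single 1 1 := by simpa using key _ _ ha hb
      subst hs; simp [single_ne]
  · rw [h.coeff_eq_zero hm]
    have h0 : ¬ (Finsupp.single (0:Fin 2) 1 = m) := by
      intro hh; rw [← hh, deg_fin2] at hm; simp [Finsupp.single_apply] at hm
    have h1 : ¬ (Finsupp.single (1:Fin 2) 1 = m) := by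
      intro hh; rw [← hh, deg_fin2] at hm; simp [Finsupp.single_apply] at hm
    simp [h0, h1]

lemma det_ne (l l' : MvPolynomial (Fin 2) ℂ) (h : l.IsHomogeneous 1) (h' : l'.IsHomogeneous 1)
    (hn : ¬∃ c : ℂ, l = c • l') (hn' : ¬∃ c : ℂ, l' = c • l) :
    coeff (Finsupp.single 0 1) l * coeff (Finsupp.single 1 1) l' -
    coeff (Finsupp.single 0 1) l' * coeff (Finsupp.single 1 1) l ≠ 0 := by
  set a := coeff (Finsupp.single 0 1) l with ha
  set b := coeff (Finsupp.single 1 1) l with hb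
  set a' := coeff (Finsupp.single 0 1) l' with ha'
  set b' := coeff (Finsupp.single 1 1) l' with hb'
  intro hd
  rw [sub_eq_zero] at hd
  by_cases h0 : a' = 0
  · by_cases h0' : b' = 0
    · exact hn' ⟨0, by rw [rep1 l' h', ← ha', ← hb', h0, h0']; simp⟩
    · have hAe : a = b / b' * a' := by
        have : a * b' = 0 := by rw [hd, h0]; ring
        have h00 : a = 0 := (mul_eq_zero.1 this).resolve_right h0'
        rw [h00, h0]; ring
      have hBe : b = b / b' * b' := by field_simp
      refine hn ⟨b / b', ?_⟩
      rw [rep1 l h, rep1 l' h', ← ha, ← hb, ← ha', ← hb', smul_eq_C_mul]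
      have eaC : (C a : MvPolynomial (Fin 2) ℂ) = C (b / b') * C a' := by
        rw [← map_mul, ← hAe]
      have ebC : (C b : MvPolynomial (Fin 2) ℂ) = C (b / b') * C b' := by
        rw [← map_mul, ← hBe]
      linear_combination (X 0 : MvPolynomial (Fin 2) ℂ) * eaC + X 1 * ebC
  · refine hn ⟨a / a', ?_⟩
    have hBe : b = a / a' * b' := by
      field_simp
      linear_combination -hd
    have hAe : a = a / a' * a' := by field_simp
    rw [rep1 l h, rep1 l' h', ← ha, ← hb, ← ha', ← hb', smul_eq_C_mul]
    have eaC : (C a : MvPolynomial (Fin 2) ℂ) = C (a / a') * C a' := by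
      rw [← map_mul, ← hAe]
    have ebC : (C b : MvPolynomial (Fin 2) ℂ) = C (a / a') * C b' := by
      rw [← map_mul, ← hBe]
    linear_combination (X 0 : MvPolynomial (Fin 2) ℂ) * eaC + X 1 * ebC

theorem stmt3 (l₁ l₂ l₃ : MvPolynomial (Fin 2) ℂ)
    (h₁ : l₁.IsHomogeneous 1) (h₂ : l₂.IsHomogeneous 1) (h₃ : l₃.IsHomogeneous 1)
    (h₁₂ : (¬∃ c : ℂ, l₁ = c • l₂) ∧ (¬∃ c : ℂ, l₂ = c • l₁))
    (h₁₃ : (¬∃ c : ℂ, l₁ = c • l₃) ∧ (¬∃ c : ℂ, l₃ = c • l₁))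
    (h₂₃ : (¬∃ c : ℂ, l₂ = c • l₃) ∧ (¬∃ c : ℂ, l₃ = c • l₂)) :
    ∃ m₁ m₂ : MvPolynomial (Fin 2) ℂ,
      m₁.IsHomogeneous 1 ∧ m₂.IsHomogeneous 1 ∧ l₁ * l₂ * l₃ = m₁ ^ 3 + m₂ ^ 3 := by
  set a₁ := coeff (Finsupp.single 0 1) l₁ with ha₁
  set b₁ := coeff (Finsupp.single 1 1) l₁ with hb₁
  set a₂ := coeff (Finsupp.single 0 1) l₂ with ha₂
  set b₂ := coeff (Finsupp.single 1 1) l₂ with hb₂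
  set a₃ := coeff (Finsupp.single 0 1) l₃ with ha₃
  set b₃ := coeff (Finsupp.single 1 1) l₃ with hb₃
  have hd : a₂ * b₃ - a₃ * b₂ ≠ 0 := det_ne l₂ l₃ h₂ h₃ h₂₃.1 h₂₃.2
  set p := (a₁ * b₃ - a₃ * b₁) / (a₂ * b₃ - a₃ * b₂) with hp
  set q := (a₂ * b₁ - a₁ * b₂) / (a₂ * b₃ - a₃ * b₂) with hq
  have hA : a₁ = p * a₂ + q * a₃ := by rw [hp, hq, div_mul_eq_mul_div, div_mul_eq_mul_div, ← add_div, eq_div_iff hd]; ring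
  have hB : b₁ = p * b₂ + q * b₃ := by rw [hp, hq, div_mul_eq_mul_div, div_mul_eq_mul_div, ← add_div, eq_div_iff hd]; ring
  have e : l₁ = C p * l₂ + C q * l₃ := by
    rw [rep1 l₁ h₁, rep1 l₂ h₂, rep1 l₃ h₃, ← ha₁, ← hb₁, ← ha₂, ← hb₂, ← ha₃, ← hb₃, hA, hB]
    push_cast [map_add, map_mul]
    ring
  have hpne : p ≠ 0 := by
    intro h0
    exact h₁₃.1 ⟨q, by rw [e, h0, smul_eq_C_mul, map_zero, zero_mul, zero_add]⟩
  have hqne : q ≠ 0 := by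
    intro h0
    exact h₁₂.1 ⟨p, by rw [e, h0, smul_eq_C_mul, map_zero, zero_mul, add_zero]⟩
  -- cube root of unity
  obtain ⟨ζ, hζ3, hζ1⟩ : ∃ ζ : ℂ, ζ ^ 3 = 1 ∧ ζ ≠ 1 := by
    have hprim := Complex.isPrimitiveRoot_exp 3 (by norm_num)
    exact ⟨_, hprim.pow_eq_one, hprim.ne_one (by norm_num)⟩
  have hω : ζ ^ 2 + ζ + 1 = 0 := by
    have hmul : (ζ - 1) * (ζ ^ 2 + ζ + 1) = 0 := by linear_combination hζ3
    exact (mul_eq_zero.1 hmul).resolve_left (sub_ne_zero.2 hζ1)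
  obtain ⟨δ, hδ⟩ := IsAlgClosed.exists_pow_nat_eq (k := ℂ) (1 / (p * q)) (n := 3) (by norm_num)
  have hδ' : δ ^ 3 * (p * q) = 1 := by rw [hδ]; field_simp
  set A₁ := δ * p * (2 + ζ) / 3 with hA₁
  set B₁ := δ * q * (1 - ζ) / 3 with hB₁
  set A₂ := δ * p * (1 - ζ) / 3 with hA₂
  set B₂ := δ * q * (2 + ζ) / 3 with hB₂
  have s1 : A₁ ^ 3 + A₂ ^ 3 = 0 := by
    rw [hA₁, hA₂]; linear_combination (δ ^ 3 * p ^ 3 / 3) * hω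
  have s2 : B₁ ^ 3 + B₂ ^ 3 = 0 := by
    rw [hB₁, hB₂]; linear_combination (δ ^ 3 * q ^ 3 / 3) * hω
  have s3 : p = 3 * (A₁ ^ 2 * B₁ + A₂ ^ 2 * B₂) := by
    rw [hA₁, hB₁, hA₂, hB₂]
    linear_combination (- p) * hδ' + (δ ^ 3 * p ^ 2 * q / 3) * hω
  have s4 : q = 3 * (A₁ * B₁ ^ 2 + A₂ * B₂ ^ 2) := by
    rw [hA₁, hB₁, hA₂, hB₂]
    linear_combination (- q) * hδ' + (δ ^ 3 * p * q ^ 2 / 3) * hω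
  refine ⟨C A₁ * l₂ + C B₁ * l₃, C A₂ * l₂ + C B₂ * l₃, ?_, ?_, ?_⟩
  · have k1 := (isHomogeneous_C (Fin 2) A₁).mul h₂
    have k2 := (isHomogeneous_C (Fin 2) B₁).mul h₃
    simpa using k1.add k2
  · have k1 := (isHomogeneous_C (Fin 2) A₂).mul h₂
    have k2 := (isHomogeneous_C (Fin 2) B₂).mul h₃
    simpa using k1.add k2
  · have hC1 : (C A₁ : MvPolynomial (Fin 2) ℂ) ^ 3 + C A₂ ^ 3 = 0 := by
      rw [← map_pow, ← map_pow, ← map_add, s1, map_zero]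
    have hC2 : (C B₁ : MvPolynomial (Fin 2) ℂ) ^ 3 + C B₂ ^ 3 = 0 := by
      rw [← map_pow, ← map_pow, ← map_add, s2, map_zero]
    have hC3 : (C p : MvPolynomial (Fin 2) ℂ) =
        3 * (C A₁ ^ 2 * C B₁ + C A₂ ^ 2 * C B₂) := by
      rw [show (3 : MvPolynomial (Fin 2) ℂ) = C 3 from (map_ofNat C 3).symm, ← map_pow, ← map_pow, ← map_mul,
        ← map_mul, ← map_add, ← map_mul, s3]
    have hC4 : (C q : MvPolynomial (Fin 2) ℂ) =
        3 * (C A₁ * C B₁ ^ 2 + C A₂ * C B₂ ^ 2) := by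
      rw [show (3 : MvPolynomial (Fin 2) ℂ) = C 3 from (map_ofNat C 3).symm, ← map_pow, ← map_pow, ← map_mul,
        ← map_mul, ← map_add, ← map_mul, s4]
    rw [e]
    linear_combination (l₂ ^ 2 * l₃) * hC3 + (l₂ * l₃ ^ 2) * hC4 - l₂ ^ 3 * hC1 - l₃ ^ 3 * hC2
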